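/- For every integer n ≥ 1, the real-number inequality ∑_{k=0}^{⌊(n−1)/2⌋} (2n − 4k − 1)/(2k + 1) ≥ n·ln(n) − 3n holds. -/

import Mathlib

/-- For every integer `n ≥ 1`,
`∑_{k=0}^{⌊(n−1)/2⌋} (2n − 4k − 1)/(2k + 1) ≥ n·ln(n) − 3n` as real numbers. -/
theorem stmt12 (n : ℕ) (hn : 1 ≤ n) :
    (n : ℝ) * Real.log n - 3 * n ≤
      ∑ k ∈ Finset.range ((n - 1) / 2 + 1),
        (2 * (n : ℝ) - 4 * (k : ℝ) - 1) / (2 * (k : ℝ) + 1) := by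
  have hd := Nat.div_add_mod (n - 1) 2
  have hmlt : (n - 1) % 2 < 2 := Nat.mod_lt _ (by norm_num)
  set m := (n - 1) / 2 with hm
  have h1 : 2 * m + 1 ≤ n := by omega
  have h2 : n ≤ 2 * m + 2 := by omega
  set S := ∑ k ∈ Finset.range (m + 1), (1 : ℝ) / (2 * (k : ℝ) + 1) with hS
  have hS0 : 0 ≤ S := Finset.sum_nonneg fun k _ => by positivity
  have tel : ∑ k ∈ Finset.range (m + 1),
      (Real.log (2 * ((k : ℝ) + 1) + 1) - Real.log (2 * (k : ℝ) + 1))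
      = Real.log (2 * ((m : ℝ) + 1) + 1) := by
    have h := Finset.sum_range_sub (fun k : ℕ => Real.log (2 * (k : ℝ) + 1)) (m + 1)
    simp only [Nat.cast_add, Nat.cast_one] at h
    rw [h]
    norm_num
  have key : ∀ k ∈ Finset.range (m + 1),
      Real.log (2 * ((k : ℝ) + 1) + 1) - Real.log (2 * (k : ℝ) + 1)
        ≤ 2 * ((1 : ℝ) / (2 * (k : ℝ) + 1)) := by
    intro k _
    have hk : (0 : ℝ) < 2 * (k : ℝ) + 1 := by positivity
    rw [← Real.log_div (by positivity) (by positivity)]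
    have h := Real.log_le_sub_one_of_pos
      (x := (2 * ((k : ℝ) + 1) + 1) / (2 * (k : ℝ) + 1)) (by positivity)
    calc Real.log ((2 * ((k : ℝ) + 1) + 1) / (2 * (k : ℝ) + 1))
        ≤ (2 * ((k : ℝ) + 1) + 1) / (2 * (k : ℝ) + 1) - 1 := h
      _ = 2 * ((1 : ℝ) / (2 * (k : ℝ) + 1)) := by field_simp; ring
  have hlog : Real.log (2 * (m : ℝ) + 3) ≤ 2 * S := by
    calc Real.log (2 * (m : ℝ) + 3) = Real.log (2 * ((m : ℝ) + 1) + 1) := by ring_nf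
      _ = ∑ k ∈ Finset.range (m + 1),
          (Real.log (2 * ((k : ℝ) + 1) + 1) - Real.log (2 * (k : ℝ) + 1)) := tel.symm
      _ ≤ ∑ k ∈ Finset.range (m + 1), 2 * ((1 : ℝ) / (2 * (k : ℝ) + 1)) :=
          Finset.sum_le_sum key
      _ = 2 * S := by rw [hS, Finset.mul_sum]
  have hsum : ∑ k ∈ Finset.range (m + 1),
      (2 * (n : ℝ) - 4 * (k : ℝ) - 1) / (2 * (k : ℝ) + 1)
      = (2 * (n : ℝ) + 1) * S - 2 * ((m : ℝ) + 1) := by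
    rw [hS, Finset.mul_sum]
    rw [show (2 : ℝ) * ((m : ℝ) + 1) = ∑ _k ∈ Finset.range (m + 1), (2 : ℝ) by
      rw [Finset.sum_const, Finset.card_range]; ring]
    rw [← Finset.sum_sub_distrib]
    refine Finset.sum_congr rfl fun k _ => ?_
    have hk : (2 : ℝ) * (k : ℝ) + 1 ≠ 0 := by positivity
    field_simp
    ring
  have hn1 : (1 : ℝ) ≤ (n : ℝ) := by exact_mod_cast hn
  have hcast2 : (n : ℝ) ≤ 2 * (m : ℝ) + 2 := by exact_mod_cast h2
  have hcast1 : 2 * (m : ℝ) + 1 ≤ (n : ℝ) := by exact_mod_cast h1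
  have hln : Real.log (n : ℝ) ≤ 2 * S := by
    refine le_trans (Real.log_le_log (by linarith) (by linarith)) hlog
  rw [hsum]
  nlinarith [hln, hS0, Real.log_nonneg hn1,
    mul_le_mul_of_nonneg_left hln (by positivity : (0 : ℝ) ≤ (n : ℝ))]
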